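/- Let G be a Δ-regular n-vertex graph and let F be the family of all supersets of maximal bipartite-inducing vertex sets of G. Then |F| ≤ (2^{Δ+1} − Δ − 1)^{n/(Δ+1)}, i.e. |F|^{Δ+1} ≤ (2^{Δ+1} − Δ − 1)^n. -/

import Mathlib

open Finset
open scoped NNReal

namespace UpsetAux

lemma geom_mean_superadd {ι : Type*} (K : Finset ι) (k : ℕ) (hk : K.card = k) (hk0 : 0 < k)
    (α β : ι → ℝ≥0) :
    (∏ i ∈ K, α i) ^ ((k : ℝ)⁻¹) + (∏ i ∈ K, β i) ^ ((k : ℝ)⁻¹)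
      ≤ (∏ i ∈ K, (α i + β i)) ^ ((k : ℝ)⁻¹) := by
  have hrne : ((k : ℝ)⁻¹) ≠ 0 := by positivity
  by_cases h0 : ∃ i ∈ K, α i + β i = 0
  · obtain ⟨i, hi, h⟩ := h0
    obtain ⟨hα, hβ⟩ := add_eq_zero.mp h
    rw [Finset.prod_eq_zero hi hα, Finset.prod_eq_zero hi hβ,
      NNReal.zero_rpow hrne, add_zero]
    exact zero_le
  · push_neg at h0
    set s : ι → ℝ≥0 := fun i => α i + β i with hs
    have hP : (∏ i ∈ K, s i) ≠ 0 := Finset.prod_ne_zero_iff.mpr h0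
    have hPr : ((∏ i ∈ K, s i) ^ ((k : ℝ)⁻¹)) ≠ 0 := by
      simp [NNReal.rpow_eq_zero_iff, hP]
    set w : ι → ℝ≥0 := fun _ => (k : ℝ≥0)⁻¹ with hw
    have hwsum : ∑ i ∈ K, w i = 1 := by
      rw [Finset.sum_const, hk, nsmul_eq_mul]
      exact mul_inv_cancel₀ (by exact_mod_cast hk0.ne')
    have hwr : ∀ i, ((w i : ℝ)) = (k : ℝ)⁻¹ := by intro i; simp [hw]
    have key : ∀ f : ι → ℝ≥0,
        (∏ i ∈ K, f i) ^ ((k : ℝ)⁻¹)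
          ≤ (∑ i ∈ K, w i * (f i / s i)) * (∏ i ∈ K, s i) ^ ((k : ℝ)⁻¹) := by
      intro f
      have hgm := NNReal.geom_mean_le_arith_mean_weighted K w (fun i => f i / s i) hwsum
      have hprod : ∏ i ∈ K, ((f i / s i) ^ ((w i : ℝ)))
          = (∏ i ∈ K, f i) ^ ((k : ℝ)⁻¹) / (∏ i ∈ K, s i) ^ ((k : ℝ)⁻¹) := by
        rw [Finset.prod_congr rfl (fun i _ => by rw [hwr i])]
        rw [NNReal.finset_prod_rpow, Finset.prod_div_distrib, NNReal.div_rpow]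
      rw [hprod] at hgm
      calc (∏ i ∈ K, f i) ^ ((k : ℝ)⁻¹)
          = ((∏ i ∈ K, f i) ^ ((k : ℝ)⁻¹) / (∏ i ∈ K, s i) ^ ((k : ℝ)⁻¹))
            * (∏ i ∈ K, s i) ^ ((k : ℝ)⁻¹) := by
            rw [div_mul_cancel₀ _ hPr]
        _ ≤ _ := mul_le_mul_left hgm _
    have hsum : (∑ i ∈ K, w i * (α i / s i)) + (∑ i ∈ K, w i * (β i / s i)) = 1 := by
      rw [← Finset.sum_add_distrib]
      have : ∀ i ∈ K, w i * (α i / s i) + w i * (β i / s i) = w i := by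
        intro i hi
        rw [← mul_add, ← add_div, div_self (h0 i hi), mul_one]
      rw [Finset.sum_congr rfl this, hwsum]
    calc (∏ i ∈ K, α i) ^ ((k : ℝ)⁻¹) + (∏ i ∈ K, β i) ^ ((k : ℝ)⁻¹)
        ≤ ((∑ i ∈ K, w i * (α i / s i)) + (∑ i ∈ K, w i * (β i / s i)))
          * (∏ i ∈ K, s i) ^ ((k : ℝ)⁻¹) := by
          rw [add_mul]; exact add_le_add (key α) (key β)
      _ = (∏ i ∈ K, s i) ^ ((k : ℝ)⁻¹) := by rw [hsum, one_mul]

lemma num_nnreal {ι : Type*} [DecidableEq ι] (I K : Finset ι) (hKI : K ⊆ I)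
    (k : ℕ) (hk : K.card = k) (hk0 : 0 < k)
    (α β γ : ι → ℝ≥0)
    (hα : ∀ i ∈ I, α i ≤ γ i) (hβ : ∀ i ∈ I, β i ≤ γ i)
    (hαβ : ∀ i ∈ K, α i + β i ≤ γ i) (a b : ℝ≥0)
    (ha : a ^ k ≤ ∏ i ∈ I, α i) (hb : b ^ k ≤ ∏ i ∈ I, β i) :
    (a + b) ^ k ≤ ∏ i ∈ I, γ i := by
  have hmahler := fun α' β' => geom_mean_superadd K k hk hk0 α' β'
  set r : ℝ := (k : ℝ)⁻¹ with hr
  have hkR : ((k : ℝ)) ≠ 0 := Nat.cast_ne_zero.mpr hk0.ne'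
  have cancel1 : ∀ x : ℝ≥0, (x ^ k) ^ r = x := by
    intro x
    rw [← NNReal.rpow_natCast x k, ← NNReal.rpow_mul, mul_inv_cancel₀ hkR, NNReal.rpow_one]
  have cancel2 : ∀ x : ℝ≥0, (x ^ r) ^ k = x := by
    intro x
    rw [← NNReal.rpow_natCast (x ^ r) k, ← NNReal.rpow_mul, hr,
      inv_mul_cancel₀ hkR, NNReal.rpow_one]
  have hsplit : ∀ f : ι → ℝ≥0, ∏ i ∈ I, f i = (∏ i ∈ K, f i) * ∏ i ∈ I \ K, f i := by
    intro f
    rw [mul_comm, Finset.prod_sdiff hKI]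
  have hstep : ∀ (f : ι → ℝ≥0) (c : ℝ≥0), (∀ i ∈ I, f i ≤ γ i) →
      c ^ k ≤ ∏ i ∈ I, f i →
      c ≤ (∏ i ∈ K, f i) ^ r * (∏ i ∈ I \ K, γ i) ^ r := by
    intro f c hf hc
    have h1 : c ≤ (∏ i ∈ I, f i) ^ r := by
      calc c = (c ^ k) ^ r := (cancel1 c).symm
        _ ≤ _ := NNReal.rpow_le_rpow hc (by positivity)
    have h2 : (∏ i ∈ I, f i) ^ r
        ≤ (∏ i ∈ K, f i) ^ r * (∏ i ∈ I \ K, γ i) ^ r := by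
      rw [← NNReal.mul_rpow]
      refine NNReal.rpow_le_rpow ?_ (by positivity)
      rw [hsplit f]
      exact mul_le_mul_right (Finset.prod_le_prod' fun i hi =>
        hf i (Finset.mem_sdiff.mp hi).1) _
    exact h1.trans h2
  have hA : a ≤ (∏ i ∈ K, α i) ^ r * (∏ i ∈ I \ K, γ i) ^ r := hstep α a hα ha
  have hB : b ≤ (∏ i ∈ K, β i) ^ r * (∏ i ∈ I \ K, γ i) ^ r := hstep β b hβ hb
  have hab : a + b ≤ (∏ i ∈ K, (α i + β i)) ^ r * (∏ i ∈ I \ K, γ i) ^ r := by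
    calc a + b ≤ ((∏ i ∈ K, α i) ^ r + (∏ i ∈ K, β i) ^ r)
        * (∏ i ∈ I \ K, γ i) ^ r := by
          rw [add_mul]; exact add_le_add hA hB
      _ ≤ _ := mul_le_mul_left (hmahler α β) _
  calc (a + b) ^ k ≤ ((∏ i ∈ K, (α i + β i)) ^ r * (∏ i ∈ I \ K, γ i) ^ r) ^ k :=
        pow_le_pow_left' hab k
    _ = (∏ i ∈ K, (α i + β i)) * ∏ i ∈ I \ K, γ i := by
        rw [mul_pow, cancel2, cancel2]
    _ ≤ (∏ i ∈ K, γ i) * ∏ i ∈ I \ K, γ i := by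
        exact mul_le_mul_left (Finset.prod_le_prod' hαβ) _
    _ = ∏ i ∈ I, γ i := (hsplit γ).symm

lemma num_nat {ι : Type*} [DecidableEq ι] (I K : Finset ι) (hKI : K ⊆ I)
    (k : ℕ) (hk : K.card = k) (hk0 : 0 < k)
    (α β γ : ι → ℕ)
    (hα : ∀ i ∈ I, α i ≤ γ i) (hβ : ∀ i ∈ I, β i ≤ γ i)
    (hαβ : ∀ i ∈ K, α i + β i ≤ γ i) (a b : ℕ)
    (ha : a ^ k ≤ ∏ i ∈ I, α i) (hb : b ^ k ≤ ∏ i ∈ I, β i) :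
    (a + b) ^ k ≤ ∏ i ∈ I, γ i := by
  have := num_nnreal I K hKI k hk hk0 (fun i => (α i : ℝ≥0)) (fun i => (β i : ℝ≥0))
    (fun i => (γ i : ℝ≥0)) (fun i hi => by exact_mod_cast hα i hi)
    (fun i hi => by exact_mod_cast hβ i hi)
    (fun i hi => by exact_mod_cast hαβ i hi) (a : ℝ≥0) (b : ℝ≥0)
    (by push_cast; exact_mod_cast ha) (by push_cast; exact_mod_cast hb)
  push_cast at this
  exact_mod_cast this

lemma shearer {V : Type*} [DecidableEq V] (k : ℕ) (hk0 : 0 < k) :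
    ∀ (n : ℕ) (U : Finset V), U.card = n →
    ∀ {ι : Type*} [DecidableEq ι] (I : Finset ι) (A : ι → Finset V)
      (F : Finset (Finset V)),
      (∀ S ∈ F, S ⊆ U) →
      (∀ v ∈ U, k ≤ (I.filter fun i => v ∈ A i).card) →
      F.card ^ k ≤ ∏ i ∈ I, (F.image (· ∩ A i)).card := by
  intro n
  induction n using Nat.strong_induction_on with
  | _ n IH =>
    intro U hU ι _ I A F hFU hcov
    rcases Finset.eq_empty_or_nonempty U with rfl | ⟨x, hx⟩
    · -- base case: U = ∅, so F ⊆ {∅}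
      rcases Finset.eq_empty_or_nonempty F with rfl | hF
      · simp only [Finset.card_empty]
        rw [Nat.zero_pow hk0]
        exact Nat.zero_le _
      · have hcard : F.card = 1 := by
          refine le_antisymm (Finset.card_le_one.mpr fun a ha b hb => ?_)
            (Finset.card_pos.mpr hF)
          rw [Finset.subset_empty.mp (hFU a ha), Finset.subset_empty.mp (hFU b hb)]
        rw [hcard, one_pow]
        exact Finset.one_le_prod' fun i _ =>
          Finset.card_pos.mpr (hF.image _)
    · -- inductive step
      have hn0 : 0 < n := hU ▸ Finset.card_pos.mpr ⟨x, hx⟩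
      set U' := U.erase x with hU'def
      have hU'card : U'.card = n - 1 := by rw [hU'def, Finset.card_erase_of_mem hx, hU]
      have hlt : n - 1 < n := Nat.sub_lt hn0 one_pos
      set F₀ := F.filter (fun S => x ∉ S) with hF₀
      set F₁ := F.filter (fun S => x ∈ S) with hF₁
      set F₁' := F₁.image (fun S => S.erase x) with hF₁'
      set A' : ι → Finset V := fun i => (A i).erase x with hA'
      have hmemF₁ : ∀ S ∈ F₁, x ∈ S := fun S hS => (Finset.mem_filter.mp hS).2
      have hcardF : F.card = F₀.card + F₁.card := by
        rw [hF₀, hF₁, add_comm]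
        exact (Finset.card_filter_add_card_filter_not (fun S => x ∈ S)).symm
      have hcardF₁' : F₁'.card = F₁.card := by
        rw [hF₁']
        apply Finset.card_image_of_injOn
        intro S hS T hT h
        rw [← Finset.insert_erase (hmemF₁ S hS), ← Finset.insert_erase (hmemF₁ T hT)]
        exact congrArg (insert x) h
      -- covering condition on U'
      have hcov' : ∀ v ∈ U', k ≤ (I.filter fun i => v ∈ A' i).card := by
        intro v hv
        have hvx : v ≠ x := Finset.ne_of_mem_erase hv
        have : (I.filter fun i => v ∈ A' i) = (I.filter fun i => v ∈ A i) := by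
          apply Finset.filter_congr
          intro i _
          simp [hA', Finset.mem_erase, hvx]
        rw [this]
        exact hcov v (Finset.mem_of_mem_erase hv)
      -- inductive hypotheses
      have IH0 : F₀.card ^ k ≤ ∏ i ∈ I, (F₀.image (· ∩ A' i)).card := by
        refine IH (n-1) hlt U' hU'card I A' F₀ ?_ hcov'
        intro S hS
        rw [Finset.subset_erase]
        exact ⟨hFU S (Finset.mem_of_mem_filter S hS), (Finset.mem_filter.mp hS).2⟩
      have IH1 : F₁'.card ^ k ≤ ∏ i ∈ I, (F₁'.image (· ∩ A' i)).card := by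
        refine IH (n-1) hlt U' hU'card I A' F₁' ?_ hcov'
        intro S hS
        obtain ⟨T, hT, rfl⟩ := Finset.mem_image.mp hS
        exact Finset.erase_subset_erase x (hFU T (Finset.mem_of_mem_filter T hT))
      -- the three cardinality functions
      set α : ι → ℕ := fun i => (F₀.image (· ∩ A' i)).card with hα_def
      set β : ι → ℕ := fun i => (F₁'.image (· ∩ A' i)).card with hβ_def
      set γ : ι → ℕ := fun i => (F.image (· ∩ A i)).card with hγ_def
      -- key set identities
      have hinter₀ : ∀ S, x ∉ S → ∀ i, S ∩ A' i = S ∩ A i := by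
        intro S hxS i
        ext w
        simp only [Finset.mem_inter, hA', Finset.mem_erase]
        exact ⟨fun ⟨h1, _, h3⟩ => ⟨h1, h3⟩, fun ⟨h1, h2⟩ => ⟨h1, fun h => hxS (h ▸ h1), h2⟩⟩
      have himg₀ : ∀ i, F₀.image (· ∩ A' i) = F₀.image (· ∩ A i) := by
        intro i
        apply Finset.image_congr
        intro S hS
        exact hinter₀ S (Finset.mem_filter.mp hS).2 i
      have himgβ : ∀ i, F₁'.image (· ∩ A' i) = (F₁.image (· ∩ A i)).image (·.erase x) := by
        intro i
        rw [hF₁', Finset.image_image, Finset.image_image]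
        apply Finset.image_congr
        intro S _
        show S.erase x ∩ (A i).erase x = (S ∩ A i).erase x
        ext w
        simp only [Finset.mem_inter, Finset.mem_erase]
        tauto
      have hα_le : ∀ i ∈ I, α i ≤ γ i := by
        intro i _
        rw [hα_def, hγ_def]
        simp only [himg₀ i]
        exact Finset.card_le_card (Finset.image_subset_image (Finset.filter_subset _ _))
      have hβ_le : ∀ i ∈ I, β i ≤ γ i := by
        intro i _
        rw [hβ_def, hγ_def]
        simp only [himgβ i]
        calc ((F₁.image (· ∩ A i)).image (·.erase x)).card
            ≤ (F₁.image (· ∩ A i)).card := Finset.card_image_le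
          _ ≤ _ := Finset.card_le_card (Finset.image_subset_image (Finset.filter_subset _ _))
      -- choose K
      obtain ⟨K, hKsub, hKcard⟩ := Finset.exists_subset_card_eq (hcov x hx)
      have hKI : K ⊆ I := hKsub.trans (Finset.filter_subset _ _)
      have hKx : ∀ i ∈ K, x ∈ A i := fun i hi => (Finset.mem_filter.mp (hKsub hi)).2
      have hαβ_le : ∀ i ∈ K, α i + β i ≤ γ i := by
        intro i hi
        have hxAi := hKx i hi
        -- P and Q
        set P := F₀.image (· ∩ A i) with hP
        set Q := F₁.image (· ∩ A i) with hQ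
        have hαP : α i = P.card := by rw [hα_def]; simp only [himg₀ i]; rfl
        have hQx : ∀ Z ∈ Q, x ∈ Z := by
          intro Z hZ
          obtain ⟨S, hS, rfl⟩ := Finset.mem_image.mp hZ
          exact Finset.mem_inter.mpr ⟨hmemF₁ S hS, hxAi⟩
        have hβQ : β i = Q.card := by
          rw [hβ_def]
          simp only [himgβ i]
          apply Finset.card_image_of_injOn
          intro Z hZ W hW h
          rw [← Finset.insert_erase (hQx Z hZ), ← Finset.insert_erase (hQx W hW)]
          exact congrArg (insert x) h
        have hPQdisj : Disjoint P Q := by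
          rw [Finset.disjoint_left]
          intro Z hZ hZQ
          obtain ⟨S, hS, rfl⟩ := Finset.mem_image.mp hZ
          have : x ∉ S ∩ A i :=
            fun h => (Finset.mem_filter.mp hS).2 (Finset.mem_inter.mp h).1
          exact this (hQx _ hZQ)
        have hPQsub : P ∪ Q ⊆ F.image (· ∩ A i) := by
          apply Finset.union_subset <;>
            exact Finset.image_subset_image (Finset.filter_subset _ _)
        calc α i + β i = P.card + Q.card := by rw [hαP, hβQ]
          _ = (P ∪ Q).card := (Finset.card_union_of_disjoint hPQdisj).symm
          _ ≤ γ i := Finset.card_le_card hPQsub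
      have := num_nat I K hKI k hKcard hk0 α β γ hα_le hβ_le hαβ_le
        F₀.card F₁'.card IH0 IH1
      rw [hcardF, ← hcardF₁']
      exact this

lemma pendant {V : Type*} (G : SimpleGraph V) (B : Set V) (v u : V)
    (hB : (G.induce B).Colorable 2)
    (hnb : ∀ w ∈ B, G.Adj v w → w = u) :
    (G.induce (insert v B)).Colorable 2 := by
  classical
  obtain ⟨c⟩ := hB
  have hne : ∀ z : Fin 2, z + 1 ≠ z := by decide
  refine ⟨SimpleGraph.Coloring.mk (fun w => if hw : (w : V) ∈ B then c ⟨w, hw⟩ else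
      (if hu : u ∈ B then c ⟨u, hu⟩ + 1 else 0)) ?_⟩
  rintro ⟨w, hw⟩ ⟨w', hw'⟩ hadj
  have hG : G.Adj w w' := hadj
  by_cases h1 : w ∈ B <;> by_cases h2 : w' ∈ B
  · simp only [dif_pos h1, dif_pos h2]
    exact c.valid hG
  · have hw'v : w' = v := by
      rcases hw' with h | h
      · exact h
      · exact absurd h h2
    have hwu : w = u := hnb w h1 (hw'v ▸ hG.symm)
    subst hwu hw'v
    simp only [dif_pos h1, dif_neg h2, dif_pos h1]
    exact fun h => hne _ h.symm
  · have hwv : w = v := by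
      rcases hw with h | h
      · exact h
      · exact absurd h h1
    have hw'u : w' = u := hnb w' h2 (hwv ▸ hG)
    subst hw'u hwv
    simp only [dif_neg h1, dif_pos h2]
    exact hne _
  · have hwv : w = v := by rcases hw with h | h; exact h; exact absurd h h1
    have hw'v : w' = v := by rcases hw' with h | h; exact h; exact absurd h h2
    exact absurd (hwv ▸ hw'v ▸ hG) (G.irrefl)

lemma not_small_trace {V : Type*} (G : SimpleGraph V) (B : Set V) (v u : V)
    (hcol : (G.induce B).Colorable 2)
    (hmax : ∀ B', B ⊆ B' → (G.induce B').Colorable 2 → B' = B)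
    (hv : v ∉ B) (hnb : ∀ w ∈ B, G.Adj v w → w = u) : False := by
  have h := hmax _ (Set.subset_insert v B) (pendant G B v u hcol hnb)
  exact hv (h ▸ Set.mem_insert v B)

end UpsetAux

theorem upset_maximal_bipartite_bound
    {V : Type*} [Fintype V] (G : SimpleGraph V) [DecidableRel G.Adj]
    (Δ : ℕ) (hreg : G.IsRegularOfDegree Δ) :
    Nat.card {T : Set V // ∃ B : Set V,
        ((G.induce B).Colorable 2 ∧
          ∀ B' : Set V, B ⊆ B' → (G.induce B').Colorable 2 → B' = B) ∧
        B ⊆ T} ^ (Δ + 1)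
      ≤ (2 ^ (Δ + 1) - Δ - 1) ^ (Fintype.card V) := by
  classical
  set P : Set V → Prop := fun T => ∃ B : Set V,
      ((G.induce B).Colorable 2 ∧
        ∀ B' : Set V, B ⊆ B' → (G.induce B').Colorable 2 → B' = B) ∧
      B ⊆ T with hP
  set 𝔽 : Finset (Finset V) := Finset.univ.filter (fun S : Finset V => P ↑S) with h𝔽
  -- Step 1: Nat.card equals 𝔽.card
  have hcard : Nat.card {T : Set V // P T} = 𝔽.card := by
    have e : {T : Set V // P T} ≃ {S : Finset V // S ∈ 𝔽} := by
      refine ⟨fun T => ⟨T.1.toFinset, ?_⟩, fun S => ⟨(S.1 : Set V), ?_⟩, ?_, ?_⟩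
      · simp only [h𝔽, Finset.mem_filter, Finset.mem_univ, true_and, Set.coe_toFinset]
        exact T.2
      · have := S.2
        simp only [h𝔽, Finset.mem_filter, Finset.mem_univ, true_and] at this
        exact this
      · intro T; ext x; simp
      · intro S; ext x; simp
    rw [Nat.card_congr e, Nat.card_eq_finsetCard]
  rw [hcard]
  -- closed neighborhoods
  set N : V → Finset V := fun v => insert v (G.neighborFinset v) with hN
  have hNcard : ∀ v, (N v).card = Δ + 1 := by
    intro v
    rw [hN]
    rw [Finset.card_insert_of_notMem (SimpleGraph.notMem_neighborFinset_self G v),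
      G.card_neighborFinset_eq_degree, hreg v]
  have hNmem : ∀ u v : V, u ∈ N v ↔ u = v ∨ G.Adj v u := by
    intro u v
    simp [hN, SimpleGraph.mem_neighborFinset]
  -- covering condition
  have hcov : ∀ u : V, (Finset.univ.filter fun v => u ∈ N v) = N u := by
    intro u
    ext v
    simp only [Finset.mem_filter, Finset.mem_univ, true_and, hNmem u v, hNmem v u]
    constructor
    · rintro (h | h)
      · exact Or.inl h.symm
      · exact Or.inr h.symm
    · rintro (h | h)
      · exact Or.inl h.symm
      · exact Or.inr h.symm
  -- trace bound
  have htrace : ∀ v : V, (𝔽.image (· ∩ N v)).card ≤ 2 ^ (Δ + 1) - Δ - 1 := by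
    intro v
    set Bad : Finset (Finset V) :=
      insert ∅ ((G.neighborFinset v).image fun u => {u}) with hBad
    have hBadcard : Bad.card = Δ + 1 := by
      rw [hBad, Finset.card_insert_of_notMem, Finset.card_image_of_injective _
        (fun a b h => Finset.singleton_injective h)]
      · rw [G.card_neighborFinset_eq_degree, hreg v]
      · simp only [Finset.mem_image, not_exists]
        intro u
        rintro ⟨-, h⟩
        exact Finset.singleton_ne_empty u h
    have hBadsub : Bad ⊆ (N v).powerset := by
      intro Z hZ
      rw [Finset.mem_powerset]
      rcases Finset.mem_insert.mp hZ with rfl | hZ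
      · exact Finset.empty_subset _
      · obtain ⟨u, hu, rfl⟩ := Finset.mem_image.mp hZ
        intro w hw
        rw [Finset.mem_singleton.mp hw]
        exact Finset.mem_insert.mpr (Or.inr hu)
    have hsub : 𝔽.image (· ∩ N v) ⊆ (N v).powerset \ Bad := by
      intro Z hZ
      obtain ⟨S, hS, rfl⟩ := Finset.mem_image.mp hZ
      have hPS : P ↑S := (Finset.mem_filter.mp hS).2
      obtain ⟨B, ⟨hcolB, hmaxB⟩, hBS⟩ := hPS
      rw [Finset.mem_sdiff, Finset.mem_powerset]
      refine ⟨Finset.inter_subset_right, ?_⟩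
      intro hbad
      rcases Finset.mem_insert.mp hbad with hempty | hsing
      · -- S ∩ N v = ∅
        have hvS : v ∉ B := by
          intro hvB
          have : v ∈ S ∩ N v := Finset.mem_inter.mpr
            ⟨Set.mem_toFinset.mp (by simpa using hBS hvB), Finset.mem_insert_self v _⟩
          rw [hempty] at this
          exact absurd this (Finset.notMem_empty v)
        refine UpsetAux.not_small_trace G B v v hcolB hmaxB hvS ?_
        intro w hwB hadj
        exfalso
        have : w ∈ S ∩ N v := Finset.mem_inter.mpr
          ⟨by simpa using hBS hwB, (hNmem w v).mpr (Or.inr hadj)⟩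
        rw [hempty] at this
        exact Finset.notMem_empty w this
      · obtain ⟨u, hu, husing⟩ := Finset.mem_image.mp hsing
        have hadjvu : G.Adj v u := (G.mem_neighborFinset v u).mp hu
        -- S ∩ N v = {u}
        have hvnotS : v ∉ S := by
          intro hvS
          have : v ∈ S ∩ N v := Finset.mem_inter.mpr ⟨hvS, Finset.mem_insert_self v _⟩
          rw [← husing] at this
          have := Finset.mem_singleton.mp this
          exact G.irrefl (this ▸ hadjvu)
        have hvB : v ∉ B := fun hvB => hvnotS (by simpa using hBS hvB)
        refine UpsetAux.not_small_trace G B v u hcolB hmaxB hvB ?_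
        intro w hwB hadj
        have : w ∈ S ∩ N v := Finset.mem_inter.mpr
          ⟨by simpa using hBS hwB, (hNmem w v).mpr (Or.inr hadj)⟩
        rw [← husing] at this
        exact Finset.mem_singleton.mp this
    calc (𝔽.image (· ∩ N v)).card ≤ ((N v).powerset \ Bad).card :=
          Finset.card_le_card hsub
      _ = 2 ^ (Δ + 1) - Δ - 1 := by
          rw [Finset.card_sdiff_of_subset hBadsub, Finset.card_powerset, hNcard v, hBadcard,
            Nat.sub_sub]
  -- apply Shearer
  have hshearer := UpsetAux.shearer (Δ + 1) (Nat.succ_pos Δ) (Fintype.card V)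
    Finset.univ (Finset.card_univ) Finset.univ N 𝔽
    (fun S _ => Finset.subset_univ S)
    (fun v _ => by rw [hcov v, hNcard v])
  calc 𝔽.card ^ (Δ + 1) ≤ ∏ v ∈ Finset.univ, (𝔽.image (· ∩ N v)).card := hshearer
    _ ≤ ∏ _v ∈ (Finset.univ : Finset V), (2 ^ (Δ + 1) - Δ - 1) :=
        Finset.prod_le_prod' fun v _ => htrace v
    _ = (2 ^ (Δ + 1) - Δ - 1) ^ (Fintype.card V) := by
        rw [Finset.prod_const, Finset.card_univ]
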